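/- Let d ≥ 2, m = 2d, and r, t ∈ ℂ with t ≠ 0 satisfy the unitarity constraints |r|² + (m−1)|t|² = 1 and (m−2)|t|² + conj(r)·t + r·conj(t) = 0, and set ρ = |r|² − |t|². Then the dispersion 𝒟(n) = K·Σ_{a∈(Fin m)^n} ‖e(a_1)+⋯+e(a_n)‖²·|Ξ(a)|² of the quantum walk with random phase shifts grows linearly with slope (1+ρ)/(1−ρ), up to an exponentially small correction: there exist constants c ∈ ℝ and C ≥ 0 such that for all n ≥ 1, |𝒟(n) − ((1+ρ)/(1−ρ))·n − c| ≤ C·|ρ|^n. -/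

import Mathlib

noncomputable section

open scoped BigOperators ComplexConjugate RealInnerProductSpace

/-- `Ξ(a_1, …, a_n) = ∏_{j=1}^{n-1} (t + (r - t) δ_{a_j, a_{j+1}})` (empty product is 1). -/
def Xi (m n : ℕ) (r t : ℂ) (a : Fin n → Fin m) : ℂ :=
  ∏ j : Fin n, if h : (j : ℕ) + 1 < n then
    (t + (r - t) * (if a j = a ⟨(j : ℕ) + 1, h⟩ then 1 else 0)) else 1

/-- The `2d` signed standard basis vectors of `ℝ^d`: `e(2k) = u_k`, `e(2k+1) = -u_k`. -/
def eR (d : ℕ) (a : Fin (2 * d)) : EuclideanSpace ℝ (Fin d) :=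
  EuclideanSpace.single ⟨(a : ℕ) / 2, by have := a.2; omega⟩
    (if (a : ℕ) % 2 = 0 then 1 else -1)

/-- The normalization constant `K = |(r-t)/√m + √m t|²` with `m = 2d`. -/
def K (d : ℕ) (r t : ℂ) : ℝ :=
  ‖(r - t) / (Real.sqrt (2 * d) : ℂ) + (Real.sqrt (2 * d) : ℂ) * t‖ ^ 2

/-- The dispersion `𝒟(n) = K Σ_a ‖e(a_1)+⋯+e(a_n)‖² |Ξ(a)|²` of the phase-averaged
quantum walk with random phase shifts. -/
def Dsp (d : ℕ) (r t : ℂ) (n : ℕ) : ℝ :=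
  K d r t * ∑ a : Fin n → Fin (2 * d),
    ‖∑ j : Fin n, eR d (a j)‖ ^ 2 * ‖Xi (2 * d) n r t a‖ ^ 2

/-- The auxiliary sum `R(n) = Σ_a |Ξ(a)|² ⟨e(a_1)+⋯+e(a_n), e(a_n)⟩`. -/
def Rsum (d : ℕ) (r t : ℂ) (n : ℕ) : ℝ :=
  if hn : 0 < n then
    ∑ a : Fin n → Fin (2 * d), ‖Xi (2 * d) n r t a‖ ^ 2 *
      ⟪(∑ j : Fin n, eR d (a j)), eR d (a ⟨n - 1, by omega⟩)⟫
  else 0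

namespace QWAux

open Finset

/-! ### Basic facts about `eR` -/

lemma inner_eR_self (d : ℕ) (b : Fin (2*d)) : ⟪eR d b, eR d b⟫ = (1:ℝ) := by
  unfold eR
  rw [real_inner_self_eq_norm_sq]
  rcases Nat.even_or_odd (b : ℕ) with h | h
  · simp [Nat.even_iff.mp h, EuclideanSpace.norm_single]
  · simp [Nat.odd_iff.mp h, EuclideanSpace.norm_single]

lemma normsq_eR (d : ℕ) (b : Fin (2*d)) : ‖eR d b‖^2 = (1:ℝ) := by
  rw [← real_inner_self_eq_norm_sq, inner_eR_self]

lemma eR_pair (d : ℕ) (x y : Fin (2*d)) (h : (x:ℕ)/2 = (y:ℕ)/2)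
    (hx : (x:ℕ) % 2 = 0) (hy : (y:ℕ) % 2 = 1) : eR d x + eR d y = 0 := by
  unfold eR
  ext i
  simp only [hx, hy, if_pos, one_ne_zero, if_neg, PiLp.add_apply, PiLp.zero_apply,
    EuclideanSpace.single_apply, reduceIte]
  split_ifs with h1 h2 h2
  · ring
  · exact absurd (Fin.ext (by rw [h1]; exact h)) h2
  · exact absurd (Fin.ext (by rw [h2]; exact h.symm)) h1
  · ring

lemma sum_eR (d : ℕ) : ∑ b : Fin (2*d), eR d b = 0 := by
  apply Finset.sum_ninvolution (g := fun b : Fin (2*d) =>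
    ⟨if (b:ℕ) % 2 = 0 then (b:ℕ)+1 else (b:ℕ)-1, by have := b.2; split <;> omega⟩)
  · intro b
    rcases Nat.even_or_odd (b : ℕ) with h | h
    · have hb := Nat.even_iff.mp h
      exact eR_pair d b _ (by simp [hb]; omega) hb (by simp [hb]; omega)
    · have hb := Nat.odd_iff.mp h
      rw [add_comm]
      exact eR_pair d _ b (by simp [hb]; omega) (by simp [hb]; omega) hb
  · intro b _
    apply Fin.ne_of_val_ne
    rcases Nat.even_or_odd (b : ℕ) with h | h
    · have hb := Nat.even_iff.mp h; simp [hb]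
    · have hb := Nat.odd_iff.mp h; simp [hb]; omega
  · intro b; exact Finset.mem_univ _
  · intro b
    apply Fin.ext
    simp only [Fin.val_mk]
    split_ifs <;> omega

/-! ### The recursion for `Xi` along `Fin.snoc` -/

lemma Xi_one (m : ℕ) (r t : ℂ) (a : Fin 1 → Fin m) : Xi m 1 r t a = 1 := by
  unfold Xi; simp

lemma Xi_snoc (m n : ℕ) (r t : ℂ) (a : Fin (n+1) → Fin m) (b : Fin m) :
    Xi m (n+2) r t (Fin.snoc a b) =
      Xi m (n+1) r t a * (t + (r - t) * if a (Fin.last n) = b then 1 else 0) := by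
  unfold Xi
  rw [Fin.prod_univ_castSucc]
  rw [dif_neg (by simp), mul_one]
  conv_rhs => rw [Fin.prod_univ_castSucc, dif_neg (show ¬((Fin.last n : ℕ)+1 < n+1) by simp),
    mul_one]
  rw [Fin.prod_univ_castSucc]
  congr 1
  · apply Finset.prod_congr rfl
    intro i _
    have h1 : ((i.castSucc.castSucc : Fin (n+2)) : ℕ) + 1 < n + 2 := by
      have := i.2; simp only [Fin.coe_castSucc]; omega
    have h2 : ((i.castSucc : Fin (n+1)) : ℕ) + 1 < n + 1 := by
      have := i.2; simp only [Fin.coe_castSucc]; omega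
    rw [dif_pos h1, dif_pos h2]
    have e2 : (⟨((i.castSucc.castSucc : Fin (n+2)) : ℕ) + 1, h1⟩ : Fin (n+2)) =
        Fin.castSucc ⟨((i.castSucc : Fin (n+1)) : ℕ) + 1, h2⟩ := rfl
    rw [e2, Fin.snoc_castSucc, Fin.snoc_castSucc]
  · have h1 : (((Fin.last n).castSucc : Fin (n+2)) : ℕ) + 1 < n + 2 := by simp
    rw [dif_pos h1]
    have e2 : (⟨(((Fin.last n).castSucc : Fin (n+2)) : ℕ) + 1, h1⟩ : Fin (n+2)) =
        Fin.last (n+1) := rfl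
    rw [e2, Fin.snoc_castSucc, Fin.snoc_last]

/-- The transition weight of the induced Markov chain. -/
def wt (m : ℕ) (r t : ℂ) (x y : Fin m) : ℝ := if x = y then ‖r‖^2 else ‖t‖^2

lemma normsq_Xi_snoc (m n : ℕ) (r t : ℂ) (a : Fin (n+1) → Fin m) (b : Fin m) :
    ‖Xi m (n+2) r t (Fin.snoc a b)‖^2 =
      ‖Xi m (n+1) r t a‖^2 * wt m r t (a (Fin.last n)) b := by
  rw [Xi_snoc, norm_mul, mul_pow]
  congr 1
  unfold wt
  split_ifs with h
  · have : t + (r - t) * 1 = r := by ring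
    rw [this]
  · simp

lemma sum_snoc {M : Type*} [AddCommMonoid M] (m n : ℕ) (f : (Fin (n+1) → Fin m) → M) :
    ∑ a : Fin (n+1) → Fin m, f a = ∑ a : Fin n → Fin m, ∑ b : Fin m, f (Fin.snoc a b) := by
  rw [← Fintype.sum_equiv (Fin.snocEquiv (fun _ => Fin m))
      (fun p => f (Fin.snoc p.2 p.1)) f (fun p => rfl)]
  rw [Fintype.sum_prod_type]
  exact Finset.sum_comm

lemma sum_eR_snoc (d n : ℕ) (a : Fin (n+1) → Fin (2*d)) (b : Fin (2*d)) :
    ∑ j : Fin (n+2), eR d ((Fin.snoc a b : Fin (n+2) → Fin (2*d)) j) =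
      (∑ j : Fin (n+1), eR d (a j)) + eR d b := by
  rw [Fin.sum_univ_castSucc]
  simp [Fin.snoc_castSucc, Fin.snoc_last]

/-! ### Weight sums -/

section Weights

variable {d : ℕ} {r t : ℂ}
  (h1 : ‖r‖ ^ 2 + (((2 * d : ℕ) : ℝ) - 1) * ‖t‖ ^ 2 = 1)

lemma wt_decomp (x y : Fin (2*d)) :
    wt (2*d) r t x y = ‖t‖^2 + (‖r‖^2 - ‖t‖^2) * (if x = y then 1 else 0) := by
  unfold wt; split_ifs <;> ring

include h1 in
lemma wt_sum (x : Fin (2*d)) : ∑ b : Fin (2*d), wt (2*d) r t x b = 1 := by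
  simp_rw [wt_decomp]
  rw [Finset.sum_add_distrib, Finset.sum_const, ← Finset.mul_sum, Finset.sum_ite_eq,
    if_pos (Finset.mem_univ x)]
  simp only [Finset.card_univ, Fintype.card_fin, nsmul_eq_mul, mul_one]
  push_cast at h1 ⊢
  linarith

lemma wt_inner_sum (x : Fin (2*d)) (v : EuclideanSpace ℝ (Fin d)) :
    ∑ b : Fin (2*d), wt (2*d) r t x b * ⟪v, eR d b⟫ =
      (‖r‖^2 - ‖t‖^2) * ⟪v, eR d x⟫ := by
  have e1 : ∀ b : Fin (2*d), wt (2*d) r t x b * ⟪v, eR d b⟫ =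
      ‖t‖^2 * ⟪v, eR d b⟫ + (‖r‖^2 - ‖t‖^2) * (if x = b then ⟪v, eR d b⟫ else 0) := by
    intro b
    rw [wt_decomp]
    split_ifs <;> ring
  rw [Finset.sum_congr rfl (fun b _ => e1 b), Finset.sum_add_distrib,
    ← Finset.mul_sum, ← inner_sum, sum_eR, inner_zero_right, mul_zero, zero_add,
    ← Finset.mul_sum, Finset.sum_ite_eq, if_pos (Finset.mem_univ x)]

end Weights

/-! ### The three basic sums and their recursions -/

/-- Total weight `T(n) = Σ_a |Ξ(a)|²`. -/
def T (d : ℕ) (r t : ℂ) (n : ℕ) : ℝ := ∑ a : Fin n → Fin (2*d), ‖Xi (2*d) n r t a‖^2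

/-- `R(n+1)` (with shifted index). -/
def Rr (d : ℕ) (r t : ℂ) (n : ℕ) : ℝ :=
  ∑ a : Fin (n+1) → Fin (2*d), ‖Xi (2*d) (n+1) r t a‖^2 *
    ⟪∑ j : Fin (n+1), eR d (a j), eR d (a (Fin.last n))⟫

/-- The unnormalized second moment `S(n)`. -/
def S (d : ℕ) (r t : ℂ) (n : ℕ) : ℝ :=
  ∑ a : Fin n → Fin (2*d), ‖∑ j : Fin n, eR d (a j)‖^2 * ‖Xi (2*d) n r t a‖^2

section Recursions

variable {d : ℕ} {r t : ℂ}
  (h1 : ‖r‖ ^ 2 + (((2 * d : ℕ) : ℝ) - 1) * ‖t‖ ^ 2 = 1)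

lemma card_fun1 (d : ℕ) : (Finset.univ : Finset (Fin 1 → Fin (2*d))).card = 2*d := by
  rw [Finset.card_univ, Fintype.card_fun]
  simp

lemma T_one : T d r t 1 = (2*d : ℕ) := by
  unfold T
  simp_rw [Xi_one, norm_one, one_pow]
  rw [Finset.sum_const, card_fun1, nsmul_eq_mul, mul_one]

include h1 in
lemma T_succ (n : ℕ) : T d r t (n+2) = T d r t (n+1) := by
  unfold T
  rw [sum_snoc]
  apply Finset.sum_congr rfl
  intro a _
  simp_rw [normsq_Xi_snoc]
  rw [← Finset.mul_sum, wt_sum h1, mul_one]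

include h1 in
lemma T_eq (n : ℕ) : T d r t (n+1) = (2*d : ℕ) := by
  induction n with
  | zero => exact T_one
  | succ k ih => rw [T_succ h1, ih]

lemma Rr_zero : Rr d r t 0 = (2*d : ℕ) := by
  unfold Rr
  have e1 : ∀ a : Fin 1 → Fin (2*d), ‖Xi (2*d) 1 r t a‖^2 *
      ⟪∑ j : Fin 1, eR d (a j), eR d (a (Fin.last 0))⟫ = 1 := by
    intro a
    rw [Xi_one, Fin.sum_univ_one, show (Fin.last 0) = (0 : Fin 1) from rfl, inner_eR_self]
    norm_num
  rw [Finset.sum_congr rfl (fun a _ => e1 a), Finset.sum_const, card_fun1, nsmul_eq_mul,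
    mul_one]

include h1 in
lemma Rr_succ (n : ℕ) : Rr d r t (n+1) =
    (‖r‖^2 - ‖t‖^2) * Rr d r t n + (2*d : ℕ) := by
  unfold Rr
  rw [sum_snoc]
  have key : ∀ a : Fin (n+1) → Fin (2*d),
      (∑ b : Fin (2*d), ‖Xi (2*d) (n+2) r t (Fin.snoc a b)‖^2 *
        ⟪∑ j : Fin (n+2), eR d ((Fin.snoc a b : Fin (n+2) → Fin (2*d)) j),
          eR d ((Fin.snoc a b : Fin (n+2) → Fin (2*d)) (Fin.last (n+1)))⟫) =
      (‖r‖^2 - ‖t‖^2) * (‖Xi (2*d) (n+1) r t a‖^2 *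
        ⟪∑ j : Fin (n+1), eR d (a j), eR d (a (Fin.last n))⟫) +
      ‖Xi (2*d) (n+1) r t a‖^2 := by
    intro a
    have e1 : ∀ b : Fin (2*d), ‖Xi (2*d) (n+2) r t (Fin.snoc a b)‖^2 *
        ⟪∑ j : Fin (n+2), eR d ((Fin.snoc a b : Fin (n+2) → Fin (2*d)) j),
          eR d ((Fin.snoc a b : Fin (n+2) → Fin (2*d)) (Fin.last (n+1)))⟫ =
        ‖Xi (2*d) (n+1) r t a‖^2 * (wt (2*d) r t (a (Fin.last n)) b *
          ⟪∑ j : Fin (n+1), eR d (a j), eR d b⟫) +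
        ‖Xi (2*d) (n+1) r t a‖^2 * wt (2*d) r t (a (Fin.last n)) b := by
      intro b
      rw [normsq_Xi_snoc, sum_eR_snoc, Fin.snoc_last, inner_add_left, inner_eR_self]
      ring
    rw [Finset.sum_congr rfl (fun b _ => e1 b), Finset.sum_add_distrib,
      ← Finset.mul_sum, ← Finset.mul_sum, wt_inner_sum, wt_sum h1]
    ring
  rw [Finset.sum_congr rfl (fun a _ => key a), Finset.sum_add_distrib, ← Finset.mul_sum]
  rw [show (∑ a : Fin (n+1) → Fin (2*d), ‖Xi (2*d) (n+1) r t a‖^2) = T d r t (n+1) from rfl,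
    T_eq h1]

include h1 in
lemma Rr_eq (hρ : 1 - (‖r‖^2 - ‖t‖^2) ≠ 0) (n : ℕ) :
    Rr d r t n = (2*d : ℕ) * (1 - (‖r‖^2 - ‖t‖^2)^(n+1)) / (1 - (‖r‖^2 - ‖t‖^2)) := by
  induction n with
  | zero =>
    rw [Rr_zero]
    generalize ‖r‖^2 - ‖t‖^2 = x at hρ ⊢
    field_simp
    ring
  | succ k ih =>
    rw [Rr_succ h1, ih]
    generalize ‖r‖^2 - ‖t‖^2 = x at hρ ⊢
    field_simp
    ring

lemma S_one : S d r t 1 = (2*d : ℕ) := by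
  unfold S
  simp_rw [Xi_one, norm_one, one_pow, mul_one, Fin.sum_univ_one, normsq_eR]
  rw [Finset.sum_const, card_fun1, nsmul_eq_mul, mul_one]

include h1 in
lemma S_succ (n : ℕ) : S d r t (n+2) =
    S d r t (n+1) + 2 * (‖r‖^2 - ‖t‖^2) * Rr d r t n + (2*d : ℕ) := by
  unfold S
  rw [sum_snoc]
  have key : ∀ a : Fin (n+1) → Fin (2*d),
      (∑ b : Fin (2*d), ‖∑ j : Fin (n+2), eR d ((Fin.snoc a b : Fin (n+2) → Fin (2*d)) j)‖^2 *
        ‖Xi (2*d) (n+2) r t (Fin.snoc a b)‖^2) =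
      ‖∑ j : Fin (n+1), eR d (a j)‖^2 * ‖Xi (2*d) (n+1) r t a‖^2 +
      (2 * (‖r‖^2 - ‖t‖^2)) * (‖Xi (2*d) (n+1) r t a‖^2 *
        ⟪∑ j : Fin (n+1), eR d (a j), eR d (a (Fin.last n))⟫) +
      ‖Xi (2*d) (n+1) r t a‖^2 := by
    intro a
    have e1 : ∀ b : Fin (2*d),
        ‖∑ j : Fin (n+2), eR d ((Fin.snoc a b : Fin (n+2) → Fin (2*d)) j)‖^2 *
          ‖Xi (2*d) (n+2) r t (Fin.snoc a b)‖^2 =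
        (‖∑ j : Fin (n+1), eR d (a j)‖^2 * ‖Xi (2*d) (n+1) r t a‖^2) *
            wt (2*d) r t (a (Fin.last n)) b +
        (2 * ‖Xi (2*d) (n+1) r t a‖^2) * (wt (2*d) r t (a (Fin.last n)) b *
          ⟪∑ j : Fin (n+1), eR d (a j), eR d b⟫) +
        ‖Xi (2*d) (n+1) r t a‖^2 * wt (2*d) r t (a (Fin.last n)) b := by
      intro b
      rw [normsq_Xi_snoc, sum_eR_snoc, norm_add_sq_real, normsq_eR]
      ring
    rw [Finset.sum_congr rfl (fun b _ => e1 b), Finset.sum_add_distrib,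
      Finset.sum_add_distrib, ← Finset.mul_sum, ← Finset.mul_sum, ← Finset.mul_sum,
      wt_inner_sum, wt_sum h1]
    ring
  rw [Finset.sum_congr rfl (fun a _ => key a), Finset.sum_add_distrib,
    Finset.sum_add_distrib, ← Finset.mul_sum]
  rw [show (∑ a : Fin (n+1) → Fin (2*d), ‖Xi (2*d) (n+1) r t a‖^2) = T d r t (n+1) from rfl,
    T_eq h1]
  rfl

include h1 in
lemma S_eq (hρ : 1 - (‖r‖^2 - ‖t‖^2) ≠ 0) (n : ℕ) :
    S d r t (n+1) = (2*d : ℕ) *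
      ((1 + (‖r‖^2 - ‖t‖^2)) / (1 - (‖r‖^2 - ‖t‖^2)) * ((n:ℝ)+1)
        - 2 * (‖r‖^2 - ‖t‖^2) / (1 - (‖r‖^2 - ‖t‖^2))^2
        + 2 * (‖r‖^2 - ‖t‖^2)^(n+2) / (1 - (‖r‖^2 - ‖t‖^2))^2) := by
  induction n with
  | zero =>
    rw [S_one]
    generalize ‖r‖^2 - ‖t‖^2 = x at hρ ⊢
    have hE : (1 + x) / (1 - x) * (((0:ℕ):ℝ)+1) - 2*x/(1-x)^2 + 2*x^(0+2)/(1-x)^2 = 1 := by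
      push_cast
      field_simp
      ring
    rw [hE, mul_one]
  | succ k ih =>
    rw [S_succ h1, ih, Rr_eq h1 hρ]
    push_cast
    generalize ‖r‖^2 - ‖t‖^2 = x at hρ ⊢
    field_simp
    ring

end Recursions

end QWAux


namespace QWAux

lemma K_eq {d : ℕ} (hd : 1 ≤ d) {r t : ℂ}
    (h1 : ‖r‖ ^ 2 + (((2 * d : ℕ) : ℝ) - 1) * ‖t‖ ^ 2 = 1)
    (h2 : (((2 * d : ℕ) : ℂ) - 2) * ((‖t‖ ^ 2 : ℝ) : ℂ) + conj r * t + r * conj t = 0) :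
    K d r t = 1 / ((2 * d : ℕ) : ℝ) := by
  have hd0 : (0:ℝ) < 2 * (d:ℝ) := by
    have : (1:ℝ) ≤ (d:ℝ) := by exact_mod_cast hd
    linarith
  set s : ℝ := Real.sqrt (2 * (d:ℝ)) with hs
  have hs2 : s^2 = 2 * (d:ℝ) := Real.sq_sqrt (le_of_lt hd0)
  have hs0 : (0:ℝ) < s := Real.sqrt_pos.mpr hd0
  have hsC : ((s:ℝ):ℂ) ≠ 0 := by exact_mod_cast ne_of_gt hs0
  set c : ℂ := ((2 * d : ℕ) : ℂ) - 1 with hc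
  set z : ℂ := r + c * t with hzdef
  have hcast : ((2 * d : ℕ) : ℂ) = ((2 * (d:ℝ) : ℝ) : ℂ) := by push_cast; ring
  have key : (r - t) / (s:ℂ) + (s:ℂ) * t = z / (s:ℂ) := by
    rw [hzdef, hc]
    field_simp
    have hss : ((s:ℝ):ℂ) * ((s:ℝ):ℂ) = 2 * ((d:ℕ):ℂ) := by
      rw [← Complex.ofReal_mul, ← sq, hs2]
      push_cast
      ring
    push_cast
    linear_combination t * hss
  have hcc : conj c = c := by
    rw [hc, map_sub, Complex.conj_natCast, map_one]
  have hz1 : z * conj z = 1 := by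
    have hrt : conj r * t + r * conj t = -((c - 1) * ((‖t‖^2 : ℝ) : ℂ)) := by
      have : c - 1 = ((2 * d : ℕ) : ℂ) - 2 := by rw [hc]; ring
      rw [this]
      linear_combination h2
    have hp : r * conj r = ((‖r‖^2 : ℝ) : ℂ) := by
      rw [Complex.mul_conj]
      norm_cast
      rw [← Complex.sq_norm]
    have hq : t * conj t = ((‖t‖^2 : ℝ) : ℂ) := by
      rw [Complex.mul_conj]
      norm_cast
      rw [← Complex.sq_norm]
    have h1C : ((‖r‖^2 : ℝ) : ℂ) + (((2 * d : ℕ) : ℂ) - 1) * ((‖t‖^2 : ℝ) : ℂ) = 1 := by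
      have := congrArg (fun x : ℝ => (x : ℂ)) h1
      push_cast at this ⊢
      linear_combination this
    rw [hzdef, map_add, map_mul, hcc]
    have expand : (r + c * t) * (conj r + c * conj t) =
        r * conj r + c * (conj r * t + r * conj t) + c^2 * (t * conj t) := by ring
    rw [expand, hp, hq, hrt]
    rw [hc] at *
    linear_combination h1C
  have hznorm : ‖z‖^2 = 1 := by
    have : Complex.normSq z = 1 := by
      have := hz1
      rw [Complex.mul_conj] at this
      exact_mod_cast this
    rw [Complex.sq_norm, this]
  unfold K
  rw [key, norm_div, div_pow, hznorm, Complex.norm_real, Real.norm_eq_abs, abs_of_pos hs0, hs2]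
  push_cast
  ring

end QWAux


/-- Theorem 1 / Eq. (63) of the paper: for a unitary generalized Grover coin with
`t ≠ 0` and `ρ = |r|² - |t|²`, the dispersion of the quantum walk with random phase
shifts grows linearly with slope `(1+ρ)/(1-ρ)` up to an exponentially small correction:
`|𝒟(n) - ((1+ρ)/(1-ρ)) n - c| ≤ C |ρ|^n` for some constants `c` and `C ≥ 0`. -/
theorem dispersion_linear_growth (d : ℕ) (hd : 2 ≤ d) (r t : ℂ) (ht : t ≠ 0)
    (h1 : ‖r‖ ^ 2 + (((2 * d : ℕ) : ℝ) - 1) * ‖t‖ ^ 2 = 1)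
    (h2 : (((2 * d : ℕ) : ℂ) - 2) * ((‖t‖ ^ 2 : ℝ) : ℂ) + conj r * t + r * conj t = 0) :
    ∃ c C : ℝ, 0 ≤ C ∧ ∀ n : ℕ, 1 ≤ n →
      |Dsp d r t n -
          ((1 + (‖r‖ ^ 2 - ‖t‖ ^ 2)) / (1 - (‖r‖ ^ 2 - ‖t‖ ^ 2))) * n - c|
        ≤ C * |‖r‖ ^ 2 - ‖t‖ ^ 2| ^ n := by
  have hq : 0 < ‖t‖^2 := pow_pos (norm_pos_iff.mpr ht) 2
  have hm0 : (0:ℝ) < ((2*d : ℕ) : ℝ) := by exact_mod_cast (by omega : 0 < 2*d)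
  have hρ1 : ‖r‖^2 - ‖t‖^2 < 1 := by
    have h' : ‖r‖^2 - ‖t‖^2 = 1 - ((2*d:ℕ):ℝ) * ‖t‖^2 := by
      push_cast at h1 ⊢
      linarith
    rw [h']
    have := mul_pos hm0 hq
    linarith
  have h1ρ : 0 < 1 - (‖r‖^2 - ‖t‖^2) := by linarith
  have hρne : 1 - (‖r‖^2 - ‖t‖^2) ≠ 0 := ne_of_gt h1ρ
  have hpos2 : 0 < (1 - (‖r‖^2 - ‖t‖^2))^2 := by positivity
  refine ⟨-(2 * (‖r‖^2 - ‖t‖^2)) / (1 - (‖r‖^2 - ‖t‖^2))^2,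
    2 * |‖r‖^2 - ‖t‖^2| / (1 - (‖r‖^2 - ‖t‖^2))^2, by positivity, ?_⟩
  intro n hn
  obtain ⟨k, rfl⟩ : ∃ k, n = k + 1 := ⟨n - 1, by omega⟩
  have hS := QWAux.S_eq h1 hρne k
  have hDsp : Dsp d r t (k+1) = K d r t * QWAux.S d r t (k+1) := rfl
  rw [hDsp, QWAux.K_eq (by omega) h1 h2, hS, one_div,
    inv_mul_cancel_left₀ (ne_of_gt hm0)]
  have hkey : ((1 + (‖r‖^2 - ‖t‖^2)) / (1 - (‖r‖^2 - ‖t‖^2)) * ((k:ℝ)+1)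
        - 2 * (‖r‖^2 - ‖t‖^2) / (1 - (‖r‖^2 - ‖t‖^2))^2
        + 2 * (‖r‖^2 - ‖t‖^2)^(k+2) / (1 - (‖r‖^2 - ‖t‖^2))^2)
      - ((1 + (‖r‖ ^ 2 - ‖t‖ ^ 2)) / (1 - (‖r‖ ^ 2 - ‖t‖ ^ 2))) * ((k+1 : ℕ) : ℝ)
      - (-(2 * (‖r‖^2 - ‖t‖^2)) / (1 - (‖r‖^2 - ‖t‖^2))^2)
      = 2 * (‖r‖^2 - ‖t‖^2)^(k+2) / (1 - (‖r‖^2 - ‖t‖^2))^2 := by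
    push_cast
    ring
  rw [hkey]
  apply le_of_eq
  rw [abs_div, abs_of_pos hpos2, abs_mul, abs_pow, abs_two, pow_succ]
  ring
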